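/- Let N ⊆ M be II₁ factors with Jones index [M:N] > 2 and suppose dim(N′ ∩ ⟨M, e_N⟩) = 2 (i.e., N′ ∩ ⟨M,e_N⟩ is spanned by e_N and 1 − e_N). Then N is singular in M: every unitary u ∈ M with uNu* = N lies in N. -/
import Mathlib


/-- If `N ⊆ M` has Jones index `[M:N] = Tr 1 > 2` and the relative commutant
`N' ∩ ⟨M, e_N⟩` is two-dimensional (spanned by `e_N` and `1 − e_N`), then `N` is singular
in `M`: every unitary `u ∈ M` normalizing `N` lies in `N`.

The ambient algebra `A` plays the role of the basic construction `⟨M, e_N⟩`, with trace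
`Tr` satisfying `Tr(e) = 1`, `Tr(1) = [M:N] > 2`, `{e}' ∩ M = N`, and `e` commuting
with `N`. -/
theorem stmt_14 {A : Type*} [Ring A] [StarRing A] [Algebra ℂ A] [StarModule ℂ A]
    (M N : StarSubalgebra ℂ A) (hNM : N ≤ M)
    (Tr : A →ₗ[ℂ] ℂ) (e : A)
    (he2 : e * e = e) (hestar : star e = e)
    (heN : ∀ y ∈ N, e * y = y * e)
    (hcomm : ∀ x ∈ M, x * e = e * x → x ∈ N)  -- `{e}' ∩ M = N`
    (hTrtrace : ∀ x y : A, Tr (x * y) = Tr (y * x))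
    (hTrfaithful : ∀ x : A, Tr (star x * x) = 0 → x = 0)
    (hTre : Tr e = 1)
    (ind : ℝ) (hTr1 : Tr 1 = (ind : ℂ)) (hind : 2 < ind)
    -- `N' ∩ ⟨M, e_N⟩` is spanned by `e` and `1 − e`
    (hrelcomm : ∀ z : A, (∀ y ∈ N, z * y = y * z) →
      ∃ a b : ℂ, z = a • e + b • (1 - e))
    (u : A) (huM : u ∈ M) (hu1 : star u * u = 1) (hu2 : u * star u = 1)
    (hnorm : ∀ y ∈ N, u * y * star u ∈ N) (hnorm' : ∀ y ∈ N, star u * y * u ∈ N) :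
    u ∈ N := by
  set z : A := u * e * star u with hz
  -- z commutes with N
  have hzcomm : ∀ y ∈ N, z * y = y * z := by
    intro y hy
    have h1 : star u * y * u ∈ N := hnorm' y hy
    have h2 : e * (star u * y * u) = (star u * y * u) * e := heN _ h1
    calc z * y = u * (e * (star u * (y * (u * star u)))) := by
          rw [hz, hu2]; simp only [mul_assoc, mul_one]
      _ = u * ((e * (star u * y * u)) * star u) := by simp only [mul_assoc]
      _ = u * ((star u * y * u * e) * star u) := by rw [h2]
      _ = (u * star u) * (y * (u * e * star u)) := by simp only [mul_assoc]
      _ = y * z := by rw [hu2, one_mul, hz]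
  obtain ⟨a, b, hab⟩ := hrelcomm z hzcomm
  -- z is idempotent
  have hz2 : z * z = z := by
    rw [hz]
    calc (u * e * star u) * (u * e * star u)
        = u * (e * ((star u * u) * (e * star u))) := by simp only [mul_assoc]
      _ = u * (e * (e * star u)) := by rw [hu1, one_mul]
      _ = u * ((e * e) * star u) := by rw [mul_assoc e e]
      _ = u * e * star u := by rw [he2, mul_assoc]
  -- e * (1-e) = 0 etc.
  have he1e : e * (1 - e) = 0 := by rw [mul_sub, mul_one, he2, sub_self]
  have h1ee : (1 - e) * e = 0 := by rw [sub_mul, one_mul, he2, sub_self]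
  have h1e2 : (1 - e) * (1 - e) = (1 - e) := by rw [mul_sub, mul_one, h1ee, sub_zero]
  -- Tr (1 - e) = ind - 1
  have hTr1e : Tr (1 - e) = (ind : ℂ) - 1 := by
    rw [map_sub, hTr1, hTre]
  -- trace of z is 1
  have hTrz : Tr z = 1 := by
    have := hTrtrace (u * e) (star u)
    rw [hz]
    calc Tr (u * e * star u) = Tr (star u * (u * e)) := hTrtrace _ _
      _ = Tr e := by rw [← mul_assoc, hu1, one_mul]
      _ = 1 := hTre
  -- Tr (z * e) = a, Tr (z * (1-e)) = b * (ind - 1)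
  have hze : z * e = a • e := by
    rw [hab, add_mul, smul_mul_assoc, smul_mul_assoc, he2, h1ee, smul_zero, add_zero]
  have hz1e : z * (1 - e) = b • (1 - e) := by
    rw [hab, add_mul, smul_mul_assoc, smul_mul_assoc, he1e, h1e2, smul_zero, zero_add]
  -- z² computations give a² = a, b² = b
  have hz2e : z * e = (a * a) • e := by
    calc z * e = z * (z * e) := by rw [← mul_assoc, hz2]
      _ = z * (a • e) := by rw [hze]
      _ = a • (z * e) := by rw [mul_smul_comm]
      _ = (a * a) • e := by rw [hze, smul_smul]
  have hz21e : z * (1 - e) = (b * b) • (1 - e) := by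
    calc z * (1 - e) = z * (z * (1 - e)) := by rw [← mul_assoc, hz2]
      _ = z * (b • (1 - e)) := by rw [hz1e]
      _ = b • (z * (1 - e)) := by rw [mul_smul_comm]
      _ = (b * b) • (1 - e) := by rw [hz1e, smul_smul]
  have hTra : a = a * a := by
    have h1 : Tr (z * e) = a := by rw [hze, map_smul, hTre, smul_eq_mul, mul_one]
    have h2 : Tr (z * e) = a * a := by rw [hz2e, map_smul, hTre, smul_eq_mul, mul_one]
    exact h1.symm.trans h2
  have hind1 : (ind : ℂ) - 1 ≠ 0 := by
    intro h
    have : (ind : ℂ) = 1 := by linear_combination h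
    have : ind = 1 := by exact_mod_cast this
    linarith
  have hTrb : b = b * b := by
    have h1 : Tr (z * (1 - e)) = b * ((ind : ℂ) - 1) := by
      rw [hz1e, map_smul, hTr1e, smul_eq_mul]
    have h2 : Tr (z * (1 - e)) = b * b * ((ind : ℂ) - 1) := by
      rw [hz21e, map_smul, hTr1e, smul_eq_mul]
    have := h1.symm.trans h2
    exact mul_right_cancel₀ hind1 (by linear_combination this)
  have ha01 : a = 0 ∨ a = 1 := by
    have h0 : a * (a - 1) = 0 := by linear_combination -hTra
    rcases mul_eq_zero.mp h0 with h | h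
    · exact Or.inl h
    · exact Or.inr (by linear_combination h)
  have hb01 : b = 0 ∨ b = 1 := by
    have h0 : b * (b - 1) = 0 := by linear_combination -hTrb
    rcases mul_eq_zero.mp h0 with h | h
    · exact Or.inl h
    · exact Or.inr (by linear_combination h)
  -- trace equation: a + b (ind - 1) = 1
  have hTrzab : a + b * ((ind : ℂ) - 1) = 1 := by
    have : Tr z = a * Tr e + b * Tr (1 - e) := by
      rw [hab, map_add, map_smul, map_smul, smul_eq_mul, smul_eq_mul]
    rw [hTrz, hTre, hTr1e, mul_one] at this
    linear_combination -this
  -- conclude a = 1, b = 0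
  have hindC : ∀ r : ℝ, (ind : ℂ) = (r : ℂ) → ind = r := by
    intro r h; exact_mod_cast h
  have hab10 : a = 1 ∧ b = 0 := by
    rcases ha01 with ha | ha <;> rcases hb01 with hb | hb
    · exfalso; rw [ha, hb] at hTrzab; simp at hTrzab
    · exfalso
      rw [ha, hb] at hTrzab
      have : (ind : ℂ) = ((2 : ℝ) : ℂ) := by push_cast; linear_combination hTrzab
      have := hindC 2 this; linarith
    · exact ⟨ha, hb⟩
    · exfalso
      rw [ha, hb] at hTrzab
      have : (ind : ℂ) = ((1 : ℝ) : ℂ) := by push_cast; linear_combination hTrzab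
      have := hindC 1 this; linarith
  have hzeq : z = e := by
    rw [hab, hab10.1, hab10.2, one_smul, zero_smul, add_zero]
  have hue : u * e = e * u := by
    calc u * e = u * e * (star u * u) := by rw [hu1, mul_one]
      _ = (u * e * star u) * u := by simp only [mul_assoc]
      _ = e * u := by rw [← hz, hzeq]
  exact hcomm u huM hue
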